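/- Let α, β > 0 with √(αβ) > 1 + 1/1600000000. Let D be the self-adjoint Jacobi operator on ℓ²(ℕ) with diagonal d_n = α for even n, d_n = β for odd n, and off-diagonal entries −γ_n/2, where γ_n = √((2n+2)(2n+3)) − √((2n+1)(2n+2)). Then D ≥ Δ(α,β)·I in the quadratic form sense, where Δ(α,β) = 2·min{√(α/β), √(β/α)}·(√(αβ) − 1 − 1/1600000000) > 0. -/

import Mathlib

noncomputable def gam (n : ℕ) : ℝ :=
  Real.sqrt ((2 * n + 2) * (2 * n + 3)) - Real.sqrt ((2 * n + 1) * (2 * n + 2))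

private lemma claim1 (u a c : ℝ) (hu0 : 0 ≤ u)
    (ha : 0 ≤ a) (hc : 0 ≤ c)
    (ha2 : a^2 = 1 + 2*u) (hc2 : c^2 = 1 + u) :
    c*a*(a-1) ≤ u + u^2 := by
  have key2 : 2*(c*a) ≤ c^2*(1+a) := by
    nlinarith [sq_nonneg (c*(1+a) - 2*a), mul_nonneg hc ha, sq_nonneg (c-a)]
  have ha1 : (0:ℝ) < 1 + a := by linarith
  have h3 : (c*a*(a-1))*(1+a) ≤ (u+u^2)*(1+a) := by
    have e : (c*a*(a-1))*(1+a) - (u+u^2)*(1+a) = u*(2*(c*a) - c^2*(1+a)) := by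
      linear_combination (c*a)*ha2 + (u*(1+a))*hc2
    nlinarith [mul_le_mul_of_nonneg_left key2 hu0]
  exact le_of_mul_le_mul_right h3 ha1

private lemma claim2 (u b d : ℝ) (hu0 : 0 ≤ u)
    (hb : 0 ≤ b) (hd : 0 ≤ d)
    (hb2 : b^2 = 1 - 2*u) (hd2 : d^2 = 1 - u) :
    d*b*(1-b) ≤ u - u^2 := by
  have key2 : 2*(d*b) ≤ d^2*(1+b) := by
    nlinarith [sq_nonneg (d*(1+b) - 2*b), mul_nonneg hd hb, sq_nonneg (d-b), sq_nonneg (d*b - 1 + 2*u)]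
  have hb1 : (0:ℝ) < 1 + b := by linarith
  have h3 : (d*b*(1-b))*(1+b) ≤ (u-u^2)*(1+b) := by
    have e : (d*b*(1-b))*(1+b) - (u-u^2)*(1+b) = u*(2*(d*b) - d^2*(1+b)) := by
      linear_combination (-(d*b))*hb2 + (u*(1+b))*hd2
    nlinarith [mul_le_mul_of_nonneg_left key2 hu0]
  exact le_of_mul_le_mul_right h3 hb1

private lemma sqrt_ineq (y : ℝ) (hy : 3 ≤ y) :
    (Real.sqrt ((y+1)*(y+2)) - Real.sqrt (y*(y+1))) * Real.sqrt (y+2)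
    + (Real.sqrt ((y-1)*y) - Real.sqrt ((y-2)*(y-1))) * Real.sqrt (y-2)
    ≤ 2 * Real.sqrt y := by
  have hy0 : 0 < y := by linarith
  set u : ℝ := 1/y with hu
  have hu0 : 0 < u := by rw [hu]; positivity
  have hu1 : u ≤ 1/3 := by
    rw [hu, div_le_div_iff₀ hy0 (by norm_num)]; linarith
  have hyu : y * u = 1 := by rw [hu]; field_simp
  have h2u : (0:ℝ) ≤ 1 - 2*u := by linarith
  have h1u : (0:ℝ) ≤ 1 - u := by linarith
  set a : ℝ := Real.sqrt (1+2*u) with hadef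
  set b : ℝ := Real.sqrt (1-2*u) with hbdef
  set c : ℝ := Real.sqrt (1+u) with hcdef
  set dd : ℝ := Real.sqrt (1-u) with hddef
  have ha : 0 ≤ a := Real.sqrt_nonneg _
  have hb : 0 ≤ b := Real.sqrt_nonneg _
  have hc : 0 ≤ c := Real.sqrt_nonneg _
  have hd : 0 ≤ dd := Real.sqrt_nonneg _
  have ha2 : a^2 = 1 + 2*u := Real.sq_sqrt (by linarith)
  have hb2 : b^2 = 1 - 2*u := Real.sq_sqrt h2u
  have hc2 : c^2 = 1 + u := Real.sq_sqrt (by linarith)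
  have hd2 : dd^2 = 1 - u := Real.sq_sqrt h1u
  have e1 : Real.sqrt ((y+1)*(y+2)) = y * (c*a) := by
    have h : (y+1)*(y+2) = y^2 * ((1+u)*(1+2*u)) := by
      rw [hu]; field_simp; try ring
    rw [h, Real.sqrt_mul (sq_nonneg y), Real.sqrt_sq hy0.le,
      Real.sqrt_mul (by linarith : (0:ℝ) ≤ 1+u)]
  have e2 : Real.sqrt (y*(y+1)) = y * c := by
    have h : y*(y+1) = y^2 * (1+u) := by rw [hu]; field_simp; try ring
    rw [h, Real.sqrt_mul (sq_nonneg y), Real.sqrt_sq hy0.le]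
  have e3 : Real.sqrt (y+2) = Real.sqrt y * a := by
    have h : y+2 = y * (1+2*u) := by rw [hu]; field_simp
    rw [h, Real.sqrt_mul hy0.le]
  have e4 : Real.sqrt ((y-1)*y) = y * dd := by
    have h : (y-1)*y = y^2 * (1-u) := by rw [hu]; field_simp; try ring
    rw [h, Real.sqrt_mul (sq_nonneg y), Real.sqrt_sq hy0.le]
  have e5 : Real.sqrt ((y-2)*(y-1)) = y * (dd*b) := by
    have h : (y-2)*(y-1) = y^2 * ((1-u)*(1-2*u)) := by rw [hu]; field_simp; try ring
    rw [h, Real.sqrt_mul (sq_nonneg y), Real.sqrt_sq hy0.le, Real.sqrt_mul h1u]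
  have e6 : Real.sqrt (y-2) = Real.sqrt y * b := by
    have h : y-2 = y * (1-2*u) := by rw [hu]; field_simp; try ring
    rw [h, Real.sqrt_mul hy0.le]
  rw [e1, e2, e3, e4, e5, e6]
  have main : c*a*(a-1) + dd*b*(1-b) ≤ 2*u := by
    have h1 := claim1 u a c hu0.le ha hc ha2 hc2
    have h2 := claim2 u b dd hu0.le hb hd hb2 hd2
    linarith
  calc (y*(c*a) - y*c) * (Real.sqrt y * a) + (y*dd - y*(dd*b)) * (Real.sqrt y * b)
      = (y * Real.sqrt y) * (c*a*(a-1) + dd*b*(1-b)) := by ring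
    _ ≤ (y * Real.sqrt y) * (2*u) := by
        apply mul_le_mul_of_nonneg_left main (by positivity)
    _ = 2 * Real.sqrt y := by
        have h : y * Real.sqrt y * (2*u) = (y*u) * (2 * Real.sqrt y) := by ring
        rw [h, hyu, one_mul]

private lemma gamB (n : ℕ) :
    gam (n+1) * Real.sqrt (2*(n:ℝ)+5) + gam n * Real.sqrt (2*(n:ℝ)+1)
    ≤ 2 * Real.sqrt (2*(n:ℝ)+3) := by
  have hn : (0:ℝ) ≤ (n:ℝ) := n.cast_nonneg
  have h := sqrt_ineq (2*(n:ℝ)+3) (by linarith)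
  unfold gam
  push_cast
  have r1 : (2*(n:ℝ)+3+1)*(2*(n:ℝ)+3+2) = (2*((n:ℝ)+1)+2)*(2*((n:ℝ)+1)+3) := by ring
  have r2 : (2*(n:ℝ)+3)*(2*(n:ℝ)+3+1) = (2*((n:ℝ)+1)+1)*(2*((n:ℝ)+1)+2) := by ring
  have r3 : (2*(n:ℝ)+3+2) = 2*(n:ℝ)+5 := by ring
  have r4 : (2*(n:ℝ)+3-1)*(2*(n:ℝ)+3) = (2*(n:ℝ)+2)*(2*(n:ℝ)+3) := by ring
  have r5 : (2*(n:ℝ)+3-2)*(2*(n:ℝ)+3-1) = (2*(n:ℝ)+1)*(2*(n:ℝ)+2) := by ring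
  have r6 : (2*(n:ℝ)+3-2) = 2*(n:ℝ)+1 := by ring
  rw [r1, r2, r3, r4, r5, r6] at h
  linarith

private lemma gam_pos (n : ℕ) : 0 < gam n := by
  unfold gam
  have hn : (0:ℝ) ≤ (n:ℝ) := n.cast_nonneg
  have h : ((2*(n:ℝ)+1) * (2*(n:ℝ)+2)) < (2*(n:ℝ)+2) * (2*(n:ℝ)+3) := by nlinarith
  have := Real.sqrt_lt_sqrt (by positivity) h
  linarith

private lemma gam_le_two (n : ℕ) : gam n ≤ 2 := by
  unfold gam
  have hn : (0:ℝ) ≤ (n:ℝ) := n.cast_nonneg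
  have hB : (0:ℝ) ≤ (2*(n:ℝ)+1) * (2*(n:ℝ)+2) := by positivity
  have hs := Real.sq_sqrt hB
  have hnB : (n:ℝ) ≤ Real.sqrt ((2*(n:ℝ)+1) * (2*(n:ℝ)+2)) :=
    Real.le_sqrt_of_sq_le (by nlinarith)
  have step : Real.sqrt ((2*(n:ℝ)+2) * (2*(n:ℝ)+3))
      ≤ Real.sqrt ((2*(n:ℝ)+1) * (2*(n:ℝ)+2)) + 2 := by
    rw [Real.sqrt_le_iff]
    constructor
    · positivity
    · nlinarith [Real.sqrt_nonneg ((2*(n:ℝ)+1) * (2*(n:ℝ)+2))]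
  linarith

/-- The Jacobi operator with diagonal `d` and off-diagonal entries `-γ_n/2`. -/
noncomputable def jacobiD (d : ℕ → ℝ) (u : ℕ → ℝ) : ℕ → ℝ
  | 0 => d 0 * u 0 - gam 0 / 2 * u 1
  | (m + 1) => d (m + 1) * u (m + 1) - gam m / 2 * u m - gam (m + 1) / 2 * u (m + 2)

private lemma gam0_bound : gam 0 * Real.sqrt 3 ≤ 2 := by
  unfold gam
  norm_num
  have h2 : (1.41:ℝ) ≤ Real.sqrt 2 := Real.le_sqrt_of_sq_le (by norm_num)
  have h6 : Real.sqrt 6 ≤ 2.45 := by rw [Real.sqrt_le_iff]; norm_num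
  have h3 : Real.sqrt 3 ≤ 1.74 := by rw [Real.sqrt_le_iff]; norm_num
  have h3' : (0:ℝ) ≤ Real.sqrt 3 := Real.sqrt_nonneg _
  nlinarith [Real.sqrt_nonneg 2, Real.sqrt_nonneg 6]

set_option maxHeartbeats 2000000 in
/-- If `√(αβ) > 1 + 1/1600000000`, then the Jacobi operator `D` with alternating
diagonal `α, β, α, β, …` and off-diagonal entries `-γ_n/2` satisfies
`D ≥ Δ(α,β) · I` in the quadratic form sense, where
`Δ(α,β) = min{√(α/β), √(β/α)} (√(αβ) - 1 - 1/1600000000) > 0`. -/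
theorem jacobi_lower_bound (α β : ℝ) (hα : 0 < α) (hβ : 0 < β)
    (hαβ : Real.sqrt (α * β) > 1 + 1 / 1600000000)
    (d : ℕ → ℝ) (hd : ∀ n, d n = if Even n then α else β)
    (Δ : ℝ)
    (hΔ : Δ = min (Real.sqrt (α / β)) (Real.sqrt (β / α)) *
      (Real.sqrt (α * β) - 1 - 1 / 1600000000)) :
    0 < Δ ∧
    ∀ v : ℕ → ℝ, (Summable fun n => (v n) ^ 2) →
      Δ * ∑' n, (v n) ^ 2 ≤ ∑' n, v n * jacobiD d v n := by
  have hgap : 0 < Real.sqrt (α*β) - 1 - 1/1600000000 := by linarith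
  have hsa : 0 < Real.sqrt (α/β) := Real.sqrt_pos.mpr (div_pos hα hβ)
  have hsb : 0 < Real.sqrt (β/α) := Real.sqrt_pos.mpr (div_pos hβ hα)
  have hm0 : 0 < min (Real.sqrt (α/β)) (Real.sqrt (β/α)) := lt_min hsa hsb
  have hΔpos : 0 < Δ := hΔ ▸ mul_pos hm0 hgap
  refine ⟨hΔpos, ?_⟩
  intro v hv
  -- the alternating scaling
  set e : ℕ → ℝ := fun n => if Even n then Real.sqrt (α/β) else Real.sqrt (β/α) with he
  have hepos : ∀ n, 0 < e n := by
    intro n; by_cases h : Even n <;> simp [he, h, hsa, hsb]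
  have hab1 : Real.sqrt (α/β) * Real.sqrt (β/α) = 1 := by
    rw [← Real.sqrt_mul (div_pos hα hβ).le,
      show α/β*(β/α) = 1 by field_simp]
    exact Real.sqrt_one
  have heinv : ∀ n, e n * e (n+1) = 1 := by
    intro n
    by_cases h : Even n
    · have h1 : ¬ Even (n+1) := by simp [Nat.even_add_one, h]
      simp [he, h, h1, hab1]
    · have h1 : Even (n+1) := Nat.even_add_one.mpr h
      simp only [he, if_neg h, if_pos h1]
      rw [mul_comm]; exact hab1
  have hde : ∀ n, e n + Δ ≤ d n := by
    intro n
    rw [hd n, hΔ]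
    by_cases h : Even n
    · rw [if_pos h]
      have h1 : e n = Real.sqrt (α/β) := by simp [he, h]
      rw [h1]
      have key : Real.sqrt (α/β) * Real.sqrt (α*β) = α := by
        rw [← Real.sqrt_mul (div_pos hα hβ).le,
          show α/β*(α*β) = α^2 by field_simp, Real.sqrt_sq hα.le]
      have h2 : min (Real.sqrt (α/β)) (Real.sqrt (β/α)) * (Real.sqrt (α*β) - 1 - 1/1600000000)
          ≤ Real.sqrt (α/β) * (Real.sqrt (α*β) - 1 - 1/1600000000) :=
        mul_le_mul_of_nonneg_right (min_le_left _ _) hgap.le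
      nlinarith [hsa]
    · rw [if_neg h]
      have h1 : e n = Real.sqrt (β/α) := by simp [he, h]
      rw [h1]
      have key : Real.sqrt (β/α) * Real.sqrt (α*β) = β := by
        rw [← Real.sqrt_mul (div_pos hβ hα).le,
          show β/α*(α*β) = β^2 by field_simp, Real.sqrt_sq hβ.le]
      have h2 : min (Real.sqrt (α/β)) (Real.sqrt (β/α)) * (Real.sqrt (α*β) - 1 - 1/1600000000)
          ≤ Real.sqrt (β/α) * (Real.sqrt (α*β) - 1 - 1/1600000000) :=
        mul_le_mul_of_nonneg_right (min_le_right _ _) hgap.le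
      nlinarith [hsb]
  -- the Chebyshev-type weights
  set q : ℕ → ℝ := fun n => (Real.sqrt (2*(n:ℝ)+3)/Real.sqrt (2*(n:ℝ)+1)) * e n with hq
  have hs1 : ∀ n : ℕ, (0:ℝ) < Real.sqrt (2*(n:ℝ)+1) := by
    intro n; apply Real.sqrt_pos.mpr; positivity
  have hs3 : ∀ n : ℕ, (0:ℝ) < Real.sqrt (2*(n:ℝ)+3) := by
    intro n; apply Real.sqrt_pos.mpr; positivity
  have hqpos : ∀ n, 0 < q n := by
    intro n
    exact mul_pos (div_pos (hs3 n) (hs1 n)) (hepos n)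
  set M : ℝ := max (Real.sqrt (α/β)) (Real.sqrt (β/α)) with hM
  have heM : ∀ n, e n ≤ M := by
    intro n; by_cases h : Even n <;> simp [he, h, hM, le_max_left, le_max_right]
  have hqM : ∀ n, q n ≤ 2*M := by
    intro n
    have hrho : Real.sqrt (2*(n:ℝ)+3)/Real.sqrt (2*(n:ℝ)+1) ≤ 2 := by
      rw [div_le_iff₀ (hs1 n)]
      have : Real.sqrt (2*(n:ℝ)+3) ≤ Real.sqrt (4*(2*(n:ℝ)+1)) := by
        apply Real.sqrt_le_sqrt; have : (0:ℝ) ≤ (n:ℝ) := n.cast_nonneg; linarith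
      rwa [Real.sqrt_mul (by norm_num : (0:ℝ) ≤ 4),
        show Real.sqrt 4 = 2 by rw [show (4:ℝ) = 2^2 by norm_num, Real.sqrt_sq]; norm_num] at this
    calc q n ≤ 2 * e n := by
          have := hepos n
          simp only [hq]
          nlinarith [hrho, (hepos n)]
      _ ≤ 2*M := by nlinarith [heM n]
  have hqinvM : ∀ n, 1/q n ≤ M := by
    intro n
    have hinv : 1/e n = e (n+1) := by
      field_simp
      rw [div_eq_iff (hepos n).ne', mul_comm]
      exact (heinv n).symm
    have hrho1 : (1:ℝ) ≤ Real.sqrt (2*(n:ℝ)+3)/Real.sqrt (2*(n:ℝ)+1) := by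
      rw [le_div_iff₀ (hs1 n), one_mul]
      apply Real.sqrt_le_sqrt; linarith
    have : 1/q n ≤ 1/e n := by
      rw [hq]
      rw [one_div, one_div, mul_inv]
      have h1 : (Real.sqrt (2*(n:ℝ)+3)/Real.sqrt (2*(n:ℝ)+1))⁻¹ ≤ 1 := by
        rw [inv_le_one_iff₀]; right; exact hrho1
      nlinarith [inv_pos.mpr (hepos n), inv_pos.mpr (div_pos (hs3 n) (hs1 n))]
    calc 1/q n ≤ 1/e n := this
      _ = e (n+1) := hinv
      _ ≤ M := heM (n+1)
  
  -- coefficient bound at site 0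
  have hcoef0 : gam 0 * q 0 / 2 ≤ e 0 := by
    have hq0 : q 0 = Real.sqrt 3 * e 0 := by
      simp only [hq]
      norm_num
    rw [hq0]
    have h0 := hepos 0
    nlinarith [gam0_bound, (gam_pos 0).le, Real.sqrt_nonneg 3]
  -- coefficient bound at sites n+1
  have hcoefS : ∀ m : ℕ, gam (m+1) * q (m+1) / 2 + gam m / (2 * q m) ≤ e (m+1) := by
    intro m
    have hq5 : q (m+1) = Real.sqrt (2*(m:ℝ)+5) / Real.sqrt (2*(m:ℝ)+3) * e (m+1) := by
      simp only [hq]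
      push_cast
      ring_nf
    have hqminv : 1 / q m = Real.sqrt (2*(m:ℝ)+1) / Real.sqrt (2*(m:ℝ)+3) * e (m+1) := by
      have hmul : q m * (Real.sqrt (2*(m:ℝ)+1) / Real.sqrt (2*(m:ℝ)+3) * e (m+1)) = 1 := by
        simp only [hq]
        field_simp
        exact heinv m
      exact (eq_one_div_of_mul_eq_one_left (by rw [mul_comm]; exact hmul)).symm
    have hrw : gam (m+1) * q (m+1) / 2 + gam m / (2 * q m)
        = (gam (m+1) * Real.sqrt (2*(m:ℝ)+5) + gam m * Real.sqrt (2*(m:ℝ)+1))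
          * (e (m+1) / (2 * Real.sqrt (2*(m:ℝ)+3))) := by
      rw [hq5, show gam m / (2 * q m) = gam m / 2 * (1 / q m) by ring, hqminv]
      ring
    rw [hrw]
    calc (gam (m+1) * Real.sqrt (2*(m:ℝ)+5) + gam m * Real.sqrt (2*(m:ℝ)+1))
          * (e (m+1) / (2 * Real.sqrt (2*(m:ℝ)+3)))
        ≤ (2 * Real.sqrt (2*(m:ℝ)+3)) * (e (m+1) / (2 * Real.sqrt (2*(m:ℝ)+3))) := by
          apply mul_le_mul_of_nonneg_right (gamB m)
          exact div_nonneg (hepos (m+1)).le (by positivity)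
      _ = e (m+1) := by
          field_simp
  -- the pieces of the quadratic form
  set G : ℕ → ℝ := fun n => gam n * (v n * v (n+1)) with hG
  set X : ℕ → ℝ := fun n => gam n * q n / 2 * v n^2 with hX
  set Y : ℕ → ℝ := fun n => gam n / (2 * q n) * v (n+1)^2 with hY
  set Y' : ℕ → ℝ := fun n => if n = 0 then 0 else Y (n-1) with hY'
  have hM0 : 0 ≤ M := le_trans hsa.le (le_max_left _ _)
  -- summability facts
  have hv2 : Summable (fun n => v (n+1)^2) := (summable_nat_add_iff 1).mpr hv
  have hXnn : ∀ n, 0 ≤ X n := by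
    intro n
    simp only [hX]
    have := (gam_pos n).le
    have := (hqpos n).le
    positivity
  have hYnn : ∀ n, 0 ≤ Y n := by
    intro n
    simp only [hY]
    have := (gam_pos n).le
    have := (hqpos n).le
    positivity
  have hXs : Summable X := by
    apply Summable.of_nonneg_of_le hXnn (fun n => ?_) (hv.mul_left (2*M))
    simp only [hX]
    have h1 := gam_le_two n
    have h2 := hqM n
    have h3 := (gam_pos n).le
    have h4 := (hqpos n).le
    have h5 : gam n * q n ≤ 2*(2*M) := mul_le_mul h1 h2 h4 (by norm_num)
    nlinarith [mul_le_mul_of_nonneg_right h5 (sq_nonneg (v n))]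
  have hYs : Summable Y := by
    apply Summable.of_nonneg_of_le hYnn (fun n => ?_) (hv2.mul_left M)
    simp only [hY]
    have h1 := gam_le_two n
    have h2 := hqinvM n
    have h3 := (gam_pos n).le
    have h4 := hqpos n
    have h5 : gam n / (2 * q n) = gam n / 2 * (1 / q n) := by ring
    have h6 : gam n / 2 * (1 / q n) ≤ 1 * M := by
      apply mul_le_mul (by linarith) h2 (by positivity) (by norm_num)
    rw [h5]
    nlinarith [sq_nonneg (v (n+1))]
  have hY's : Summable Y' := by
    apply (summable_nat_add_iff 1).mp
    apply (summable_congr (f := fun n => Y n) ?_).mp hYs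
    intro n
    simp [hY']
  have hGs : Summable G := by
    apply Summable.of_abs
    apply Summable.of_nonneg_of_le (fun n => abs_nonneg _) (fun n => ?_) (hv.add hv2)
    simp only [hG]
    calc |gam n * (v n * v (n+1))| = gam n * |v n * v (n+1)| := by
          rw [abs_mul, abs_of_pos (gam_pos n)]
      _ ≤ 2 * |v n * v (n+1)| := mul_le_mul_of_nonneg_right (gam_le_two n) (abs_nonneg _)
      _ ≤ v n^2 + v (n+1)^2 := by
          rw [abs_mul]
          nlinarith [sq_nonneg (|v n| - |v (n+1)|), sq_abs (v n), sq_abs (v (n+1)),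
            abs_nonneg (v n), abs_nonneg (v (n+1))]
  have hdpos : ∀ n, 0 < d n := by
    intro n; rw [hd n]; by_cases h : Even n <;> simp [h, hα, hβ]
  have hdmax : ∀ n, d n ≤ max α β := by
    intro n; rw [hd n]; by_cases h : Even n <;> simp [h, le_max_left, le_max_right]
  have hAs : Summable (fun n => d n * v n^2) := by
    apply Summable.of_nonneg_of_le (fun n => ?_) (fun n => ?_) (hv.mul_left (max α β))
    · exact mul_nonneg (hdpos n).le (sq_nonneg _)
    · exact mul_le_mul_of_nonneg_right (hdmax n) (sq_nonneg _)
  have hDvs : Summable (fun n => (d n - Δ) * v n^2) := by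
    apply (summable_congr (f := fun n => d n * v n^2 - Δ * v n^2) ?_).mp (hAs.sub (hv.mul_left Δ))
    intro n; ring
  -- edge estimate
  have hedge : ∀ n, G n ≤ X n + Y n := by
    intro n
    have hqn := hqpos n
    have idq : (q n * v n - v (n+1))^2 / q n
        = q n * v n^2 + v (n+1)^2 / q n - 2*(v n * v (n+1)) := by
      field_simp
      ring
    have h2 : 0 ≤ q n * v n^2 + v (n+1)^2 / q n - 2*(v n * v (n+1)) := by
      rw [← idq]
      exact div_nonneg (sq_nonneg _) hqn.le
    have h3 := mul_nonneg (by linarith [gam_pos n] : (0:ℝ) ≤ gam n / 2) h2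
    have hid : X n + Y n - G n
        = gam n / 2 * (q n * v n^2 + v (n+1)^2 / q n - 2*(v n * v (n+1))) := by
      simp only [hX, hY, hG]
      ring
    linarith
  -- per-site estimate
  have hsite : ∀ n, X n + Y' n ≤ (d n - Δ) * v n^2 := by
    intro n
    match n with
    | 0 =>
      have hY'0 : Y' 0 = 0 := by simp [hY']
      rw [hY'0, add_zero]
      have h1 : X 0 ≤ e 0 * v 0^2 := by
        simp only [hX]
        exact mul_le_mul_of_nonneg_right hcoef0 (sq_nonneg _)
      have h2 := hde 0
      nlinarith [sq_nonneg (v 0)]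
    | (m+1) =>
      have hY'm : Y' (m+1) = Y m := by simp [hY']
      rw [hY'm]
      have h1 : X (m+1) + Y m ≤ e (m+1) * v (m+1)^2 := by
        have := mul_le_mul_of_nonneg_right (hcoefS m) (sq_nonneg (v (m+1)))
        simp only [hX, hY]
        nlinarith [this]
      have h2 := hde (m+1)
      nlinarith [sq_nonneg (v (m+1))]
  -- identify the quadratic form
  set Cf : ℕ → ℝ := fun n => gam n / 2 * (v n * v (n+1)) with hCf
  set Bf : ℕ → ℝ := fun n => if n = 0 then 0 else Cf (n-1) with hBf
  have hfun : ∀ n, v n * jacobiD d v n = d n * v n^2 - Bf n - Cf n := by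
    intro n
    match n with
    | 0 =>
      show v 0 * (d 0 * v 0 - gam 0 / 2 * v 1) = _
      simp only [hBf, hCf, if_pos rfl]
      ring
    | (m+1) =>
      show v (m+1) * (d (m+1) * v (m+1) - gam m / 2 * v m - gam (m+1) / 2 * v (m+2)) = _
      simp only [hBf, hCf, if_neg (Nat.succ_ne_zero m)]
      norm_num
      ring
  have hCs : Summable Cf := by
    apply (summable_congr (f := fun n => (1/2) * G n) ?_).mp (hGs.mul_left (1/2))
    intro n
    simp only [hCf, hG]
    ring
  have hBs : Summable Bf := by
    apply (summable_nat_add_iff 1).mp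
    apply (summable_congr (f := fun n => Cf n) ?_).mp hCs
    intro n
    simp [hBf]
  have hT : ∑' n, v n * jacobiD d v n
      = (∑' n, d n * v n^2) - (∑' n, Bf n) - (∑' n, Cf n) := by
    rw [tsum_congr hfun]
    rw [show (fun n => d n * v n^2 - Bf n - Cf n)
        = fun n => (fun k => d k * v k^2 - Bf k) n - Cf n from rfl]
    rw [(hAs.sub hBs).tsum_sub hCs, hAs.tsum_sub hBs]
  have hBC : ∑' n, Bf n = ∑' n, Cf n := by
    rw [hBs.tsum_eq_zero_add]
    simp [hBf]
  have hGC : ∑' n, G n = ∑' n, Bf n + ∑' n, Cf n := by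
    rw [hBC, ← two_mul, ← tsum_mul_left]
    apply tsum_congr
    intro n
    simp only [hG, hCf]
    ring
  -- chain of inequalities
  have c1 : ∑' n, G n ≤ ∑' n, (X n + Y n) := hGs.tsum_le_tsum hedge (hXs.add hYs)
  have c2 : ∑' n, (X n + Y n) = ∑' n, X n + ∑' n, Y n := hXs.tsum_add hYs
  have c3 : ∑' n, Y' n = ∑' n, Y n := by
    rw [hY's.tsum_eq_zero_add]
    simp [hY']
  have c4 : ∑' n, X n + ∑' n, Y' n = ∑' n, (X n + Y' n) := (hXs.tsum_add hY's).symm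
  have c5 : ∑' n, (X n + Y' n) ≤ ∑' n, (d n - Δ) * v n^2 :=
    (hXs.add hY's).tsum_le_tsum hsite hDvs
  have c6 : ∑' n, (d n - Δ) * v n^2 = (∑' n, d n * v n^2) - Δ * ∑' n, v n^2 := by
    rw [show (fun n => (d n - Δ) * v n^2)
        = fun n => (fun k => d k * v k^2) n - (fun k => Δ * v k^2) n from by
      funext n; ring]
    rw [hAs.tsum_sub (hv.mul_left Δ), tsum_mul_left]
  linarith
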